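/- Suppose for each t, f_t : X → ℝ is nonnegative and satisfies the smoothness consequence f_t(x) ≤ (1+λ) f_t(y) + (1+1/λ)(β_h/2)‖x−y‖² for all λ > 0. With the multi-step switching cost of the previous statement, for any two action sequences x_{1:T}, x′_{1:T} with common initial history and any λ > 0: cost(x_{1:T}) − (1+λ)·cost(x′_{1:T}) ≤ ((β_h + (1+Σ_{k=1}^p L_k)²)/2)·(1+1/λ)·Σ_{t=1}^T ‖x_t − x′_t‖², where cost(x_{1:T}) = Σ_t f_t(x_t) + ½‖x_t − δ(x_{t−p:t−1})‖². -/

import Mathlib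

open Finset

private lemma quad_ineq {a b c lam : ℝ} (hlam : 0 < lam) (ha : 0 ≤ a)
    (hb : 0 ≤ b) (hc : 0 ≤ c) (h : a ≤ b + c) :
    a ^ 2 ≤ (1 + lam) * b ^ 2 + (1 + 1 / lam) * c ^ 2 := by
  have h1 : a ^ 2 ≤ (b + c) ^ 2 := by nlinarith
  have hinv : 1 / lam * lam = 1 := by field_simp
  have h2 : lam * (b + c) ^ 2 ≤
      lam * ((1 + lam) * b ^ 2 + (1 + 1 / lam) * c ^ 2) := by
    nlinarith [sq_nonneg (lam * b - c)]
  have h3 : (b + c) ^ 2 ≤ (1 + lam) * b ^ 2 + (1 + 1 / lam) * c ^ 2 :=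
    le_of_mul_le_mul_left (by linarith) hlam
  linarith

private lemma delta_lip {X : Type*} [NormedAddCommGroup X] {p : ℕ}
    (δ : (Fin p → X) → X) (L : Fin p → ℝ)
    (hδ : ∀ (i : Fin p) (u v : Fin p → X), (∀ j, j ≠ i → u j = v j) →
      ‖δ u - δ v‖ ≤ L i * ‖u i - v i‖) (u v : Fin p → X) :
    ‖δ u - δ v‖ ≤ ∑ i, L i * ‖u i - v i‖ := by
  classical
  suffices h : ∀ s : Finset (Fin p),
      ‖δ (s.piecewise u v) - δ v‖ ≤ ∑ i ∈ s, L i * ‖u i - v i‖ by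
    simpa using h univ
  intro s
  induction s using Finset.induction_on with
  | empty => simp
  | insert i s hi ih =>
    have hagree : ∀ j, j ≠ i → ((insert i s).piecewise u v) j = (s.piecewise u v) j := by
      intro j hj
      by_cases hjs : j ∈ s
      · rw [Finset.piecewise_eq_of_mem _ _ _ hjs,
          Finset.piecewise_eq_of_mem _ _ _ (Finset.mem_insert_of_mem hjs)]
      · rw [Finset.piecewise_eq_of_notMem _ _ _ hjs,
          Finset.piecewise_eq_of_notMem _ _ _ (by simp [Finset.mem_insert, hj, hjs])]
    have hstep : ‖δ ((insert i s).piecewise u v) - δ (s.piecewise u v)‖ ≤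
        L i * ‖u i - v i‖ := by
      have := hδ i ((insert i s).piecewise u v) (s.piecewise u v) hagree
      have hvi : ((insert i s).piecewise u v) i = u i :=
        Finset.piecewise_eq_of_mem _ _ _ (Finset.mem_insert_self i s)
      have hvi' : (s.piecewise u v) i = v i := Finset.piecewise_eq_of_notMem _ _ _ hi
      rw [hvi, hvi'] at this
      exact this
    calc ‖δ ((insert i s).piecewise u v) - δ v‖
        ≤ ‖δ ((insert i s).piecewise u v) - δ (s.piecewise u v)‖ +
            ‖δ (s.piecewise u v) - δ v‖ := by
          simpa using norm_sub_le_norm_sub_add_norm_sub _ (δ (s.piecewise u v)) _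
      _ ≤ L i * ‖u i - v i‖ + ∑ j ∈ s, L j * ‖u j - v j‖ := add_le_add hstep ih
      _ = ∑ j ∈ insert i s, L j * ‖u j - v j‖ := by rw [Finset.sum_insert hi]

private lemma shift_sum_le (T : ℕ) (D : ℤ → ℝ) (hD0 : ∀ s : ℤ, s ≤ 0 → D s = 0)
    (k : ℤ) (hk : 0 ≤ k) :
    ∑ t ∈ Icc (1 : ℤ) T, D (t - k) ^ 2 ≤ ∑ t ∈ Icc (1 : ℤ) T, D t ^ 2 := by
  classical
  have himg : (Icc (1 : ℤ) T).image (fun t => t - k) = Icc (1 - k) ((T : ℤ) - k) := by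
    ext s
    simp only [Finset.mem_image, Finset.mem_Icc]
    constructor
    · rintro ⟨a, ⟨h1, h2⟩, rfl⟩; omega
    · rintro ⟨h1, h2⟩; exact ⟨s + k, ⟨by omega, by omega⟩, by ring⟩
  have hinj : ∀ a ∈ Icc (1 : ℤ) T, ∀ b ∈ Icc (1 : ℤ) T,
      a - k = b - k → a = b := by intro a _ b _ h; omega
  have h1 : ∑ t ∈ Icc (1 : ℤ) T, D (t - k) ^ 2
      = ∑ s ∈ Icc (1 - k) ((T : ℤ) - k), D s ^ 2 := by
    rw [← himg, Finset.sum_image hinj]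
  rw [h1]
  have h2 : ∑ s ∈ Icc (1 - k) ((T : ℤ) - k), D s ^ 2
      = ∑ s ∈ (Icc (1 - k) ((T : ℤ) - k)).filter (fun s => 1 ≤ s), D s ^ 2 := by
    refine (Finset.sum_filter_of_ne ?_).symm
    intro s _ hne
    by_contra hs
    exact hne (by rw [hD0 s (by omega)]; ring)
  rw [h2]
  refine Finset.sum_le_sum_of_subset_of_nonneg ?_ (fun _ _ _ => sq_nonneg _)
  intro s hs
  simp only [Finset.mem_filter, Finset.mem_Icc] at hs ⊢
  omega

private lemma weighted_cs {n : ℕ} (w a : Fin n → ℝ) (hw : ∀ i, 0 ≤ w i) :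
    (∑ i, w i * a i) ^ 2 ≤ (∑ i, w i) * ∑ i, w i * a i ^ 2 :=
  Finset.sum_sq_le_sum_mul_sum_of_sq_eq_mul univ
    (fun i _ => hw i) (fun i _ => mul_nonneg (hw i) (sq_nonneg _))
    (fun i _ => by ring)

/-- total-cost comparison.  Each hitting cost `f t` is nonnegative
and satisfies the β_h-smoothness consequence; with the multi-step switching
cost `½‖x_t − δ(x_{t−p:t−1})‖²` (coordinate `i` of the argument of `δ` has lag
`i+1` and Lipschitz constant `L i`), for any two action sequences with common
initial history and any λ > 0:
`cost(x) − (1+λ)·cost(x') ≤ ((β_h+(1+ΣL)²)/2)(1+1/λ)·Σ‖x_t−x'_t‖²`. -/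
theorem total_cost_smoothness
    {X : Type*} [NormedAddCommGroup X] [InnerProductSpace ℝ X]
    {p : ℕ} (hp : 1 ≤ p) (T : ℕ)
    (δ : (Fin p → X) → X) (L : Fin p → ℝ) (hL : ∀ i, 0 ≤ L i)
    (hδ : ∀ (i : Fin p) (u v : Fin p → X), (∀ j, j ≠ i → u j = v j) →
      ‖δ u - δ v‖ ≤ L i * ‖u i - v i‖)
    (f : ℤ → X → ℝ) (βh : ℝ) (hβh : 0 < βh)
    (hf0 : ∀ t z, 0 ≤ f t z)
    (hfsmooth : ∀ (t : ℤ) (lam : ℝ), 0 < lam → ∀ z w : X,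
      f t z ≤ (1 + lam) * f t w + (1 + 1 / lam) * (βh / 2) * ‖z - w‖ ^ 2)
    (lam : ℝ) (hlam : 0 < lam)
    (x x' : ℤ → X) (hinit : ∀ t : ℤ, t ≤ 0 → x t = x' t)
    (cost cost' : ℝ)
    (hcost : cost = ∑ t ∈ Finset.Icc (1 : ℤ) T,
      (f t (x t) + (1 / 2) * ‖x t - δ (fun i => x (t - (i + 1)))‖ ^ 2))
    (hcost' : cost' = ∑ t ∈ Finset.Icc (1 : ℤ) T,
      (f t (x' t) + (1 / 2) * ‖x' t - δ (fun i => x' (t - (i + 1)))‖ ^ 2)) :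
    cost - (1 + lam) * cost' ≤
      ((βh + (1 + ∑ k, L k) ^ 2) / 2) * (1 + 1 / lam) *
        ∑ t ∈ Finset.Icc (1 : ℤ) T, ‖x t - x' t‖ ^ 2 := by
  classical
  set M : ℝ := 1 + ∑ k, L k with hM
  have hM1 : 1 ≤ M := by
    have : (0:ℝ) ≤ ∑ k, L k := Finset.sum_nonneg fun i _ => hL i
    linarith
  have hlaminv : (0:ℝ) ≤ 1 + 1 / lam := by positivity
  set S : ℝ := ∑ t ∈ Icc (1 : ℤ) T, ‖x t - x' t‖ ^ 2 with hS
  -- per-term bound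
  have key : ∀ t ∈ Icc (1 : ℤ) T,
      (f t (x t) + (1 / 2) * ‖x t - δ (fun i => x (t - (i + 1)))‖ ^ 2)
        - (1 + lam) * (f t (x' t) + (1 / 2) * ‖x' t - δ (fun i => x' (t - (i + 1)))‖ ^ 2)
      ≤ (1 + 1 / lam) * (βh / 2) * ‖x t - x' t‖ ^ 2
        + (1 + 1 / lam) * (M / 2) *
          (‖x t - x' t‖ ^ 2 + ∑ i, L i * ‖x (t - (i + 1)) - x' (t - (i + 1))‖ ^ 2) := by
    intro t _
    set a : ℝ := ‖x t - δ (fun i => x (t - (i + 1)))‖ with ha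
    set b : ℝ := ‖x' t - δ (fun i => x' (t - (i + 1)))‖ with hb
    set c : ℝ := ‖x t - x' t‖ + ∑ i, L i * ‖x (t - (i + 1)) - x' (t - (i + 1))‖ with hcdef
    have hc0 : 0 ≤ c := add_nonneg (norm_nonneg _)
      (Finset.sum_nonneg fun i _ => mul_nonneg (hL i) (norm_nonneg _))
    have habc : a ≤ b + c := by
      have hdec : x t - δ (fun i => x (t - (i + 1)))
          = (x' t - δ (fun i => x' (t - (i + 1)))) + ((x t - x' t)
            + (δ (fun i => x' (t - (i + 1))) - δ (fun i => x (t - (i + 1))))) := by abel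
      have hdl : ‖δ (fun i => x' (t - (i + 1))) - δ (fun i => x (t - (i + 1)))‖
          ≤ ∑ i, L i * ‖x (t - (i + 1)) - x' (t - (i + 1))‖ := by
        have := delta_lip δ L hδ (fun i => x' (t - (i + 1))) (fun i => x (t - (i + 1)))
        simpa [norm_sub_rev] using this
      calc a = ‖(x' t - δ (fun i => x' (t - (i + 1)))) + ((x t - x' t)
            + (δ (fun i => x' (t - (i + 1))) - δ (fun i => x (t - (i + 1)))))‖ := by
              rw [ha, hdec]
        _ ≤ b + ‖(x t - x' t) + (δ (fun i => x' (t - (i + 1)))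
              - δ (fun i => x (t - (i + 1))))‖ := norm_add_le _ _
        _ ≤ b + (‖x t - x' t‖ + ‖δ (fun i => x' (t - (i + 1)))
              - δ (fun i => x (t - (i + 1)))‖) := by
            exact add_le_add le_rfl (norm_add_le _ _)
        _ ≤ b + c := by rw [hcdef]; exact add_le_add le_rfl (add_le_add le_rfl hdl)
    have hq : a ^ 2 ≤ (1 + lam) * b ^ 2 + (1 + 1 / lam) * c ^ 2 :=
      quad_ineq hlam (norm_nonneg _) (norm_nonneg _) hc0 habc
    -- Cauchy-Schwarz on c
    have hcs : c ^ 2 ≤ M * (‖x t - x' t‖ ^ 2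
        + ∑ i, L i * ‖x (t - (i + 1)) - x' (t - (i + 1))‖ ^ 2) := by
      have := weighted_cs (Fin.cons 1 L)
        (Fin.cons (‖x t - x' t‖) (fun i => ‖x (t - (i + 1)) - x' (t - (i + 1))‖))
        (fun i => by
          refine Fin.cases ?_ ?_ i
          · norm_num
          · intro j; simpa using hL j)
      simpa [Fin.sum_univ_succ, hcdef, hM] using this
    have h3 : (1 + 1 / lam) * c ^ 2 ≤ (1 + 1 / lam) * (M * (‖x t - x' t‖ ^ 2
        + ∑ i, L i * ‖x (t - (i + 1)) - x' (t - (i + 1))‖ ^ 2)) :=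
      mul_le_mul_of_nonneg_left hcs hlaminv
    have hfs := hfsmooth t lam hlam (x t) (x' t)
    nlinarith [hq, h3, hfs]
  -- sum up
  have hsum : cost - (1 + lam) * cost' ≤
      (1 + 1 / lam) * (βh / 2) * S + (1 + 1 / lam) * (M / 2) *
        (S + ∑ t ∈ Icc (1 : ℤ) T,
          ∑ i, L i * ‖x (t - (i + 1)) - x' (t - (i + 1))‖ ^ 2) := by
    rw [hcost, hcost', Finset.mul_sum, ← Finset.sum_sub_distrib]
    calc _ ≤ ∑ t ∈ Icc (1 : ℤ) T,
        ((1 + 1 / lam) * (βh / 2) * ‖x t - x' t‖ ^ 2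
          + (1 + 1 / lam) * (M / 2) * (‖x t - x' t‖ ^ 2
            + ∑ i, L i * ‖x (t - (i + 1)) - x' (t - (i + 1))‖ ^ 2)) :=
        Finset.sum_le_sum key
      _ = _ := by
        rw [Finset.sum_add_distrib, ← Finset.mul_sum, ← Finset.mul_sum,
          Finset.sum_add_distrib, hS]
  have hshift : ∑ t ∈ Icc (1 : ℤ) T,
      ∑ i, L i * ‖x (t - (i + 1)) - x' (t - (i + 1))‖ ^ 2 ≤ (M - 1) * S := by
    rw [Finset.sum_comm]
    have hD0 : ∀ s : ℤ, s ≤ 0 → ‖x s - x' s‖ = 0 := fun s hs => by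
      rw [hinit s hs]; simp
    calc ∑ i, ∑ t ∈ Icc (1 : ℤ) T, L i * ‖x (t - (i + 1)) - x' (t - (i + 1))‖ ^ 2
        = ∑ i : Fin p, L i * ∑ t ∈ Icc (1 : ℤ) T, ‖x (t - (i + 1)) - x' (t - (i + 1))‖ ^ 2 := by
          simp [Finset.mul_sum]
      _ ≤ ∑ i : Fin p, L i * S := by
          refine Finset.sum_le_sum fun i _ => mul_le_mul_of_nonneg_left ?_ (hL i)
          have := shift_sum_le T (fun s => ‖x s - x' s‖)
            (fun s hs => hD0 s hs) ((i : ℤ) + 1) (by positivity)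
          simpa [hS] using this
      _ = (M - 1) * S := by rw [← Finset.sum_mul, hM]; ring
  have hfinal : (1 + 1 / lam) * (βh / 2) * S + (1 + 1 / lam) * (M / 2) * (S + (M - 1) * S)
      = ((βh + M ^ 2) / 2) * (1 + 1 / lam) * S := by ring
  calc cost - (1 + lam) * cost' ≤ (1 + 1 / lam) * (βh / 2) * S
        + (1 + 1 / lam) * (M / 2) * (S + (M - 1) * S) := by
        refine hsum.trans (add_le_add le_rfl ?_)
        have hM2 : (0:ℝ) ≤ (1 + 1 / lam) * (M / 2) := by positivity
        exact mul_le_mul_of_nonneg_left (add_le_add le_rfl hshift) hM2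
    _ = ((βh + M ^ 2) / 2) * (1 + 1 / lam) * S := hfinal
    _ = ((βh + (1 + ∑ k, L k) ^ 2) / 2) * (1 + 1 / lam) *
        ∑ t ∈ Finset.Icc (1 : ℤ) T, ‖x t - x' t‖ ^ 2 := by rw [hM, hS]
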